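/- Let (X_n)_{n∈ω} and (Y_n)_{n∈ω} be towers of uniform spaces. A bijective function h : u-lim X_n → u-lim Y_n with h(⋃_n X_n) = ⋃_n Y_n is a homeomorphism provided that for every n ≥ 1 the restriction h|X_n : X_n → u-lim Y_n is continuous and regular at X_{n-1} ⊆ X_n, and the restriction h⁻¹|Y_n : Y_n → u-lim X_n is continuous and regular at Y_{n-1} ⊆ Y_n. -/

import Mathlib

open Set Filter Topology

universe u

/-- A tower of uniform spaces on the ambient set `X`: an increasing sequence
`S 0 ⊆ S 1 ⊆ ⋯` of subsets covering `X`, each `S n` carrying a uniformity which is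
the subspace uniformity inherited from `S (n+1)`. -/
structure UniformTower (X : Type u) where
  S : ℕ → Set X
  mono : Monotone S
  iUnion_eq : ⋃ n, S n = Set.univ
  u : (n : ℕ) → UniformSpace (S n)
  compat : ∀ n, u n = UniformSpace.comap (Set.inclusion (mono (Nat.le_succ n))) (u (n + 1))

namespace UniformTower

variable {X : Type u} (T : UniformTower X)

/-- The uniform direct limit: the strongest (finest) uniformity on `X` making all
the identity inclusions `S n → X` uniformly continuous. -/
noncomputable def dirLim : UniformSpace X :=
  sInf {u' : UniformSpace X |
    ∀ n, @UniformContinuous _ _ (T.u n) u' (Subtype.val : T.S n → X)}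

/-- The height `|x| = min {n : x ∈ S n}` of a point of `X`. -/
noncomputable def height (x : X) : ℕ := sInf {n | x ∈ T.S n}

lemma mem_S_height (x : X) : x ∈ T.S (T.height x) := by
  have hx : x ∈ ⋃ n, T.S n := T.iUnion_eq ▸ Set.mem_univ x
  rcases Set.mem_iUnion.mp hx with ⟨n, hn⟩
  exact Nat.sInf_mem ⟨n, show n ∈ {m | x ∈ T.S m} from hn⟩

/-- Given a sequence of pseudometrics `d n` on the stages `S n`, the distance
`d_{|x,y|}(x,y)` where `|x,y| = max (|x|, |y|)`. -/
noncomputable def chainD (d : (n : ℕ) → T.S n → T.S n → ℝ) (x y : X) : ℝ :=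
  d (max (T.height x) (T.height y))
    ⟨x, T.mono (le_max_left _ _) (T.mem_S_height x)⟩
    ⟨y, T.mono (le_max_right _ _) (T.mem_S_height y)⟩

/-- The limit pseudometric `lim d_n` of a sequence of pseudometrics:
`lim d_n (x,y) = inf { Σ_{i=1}^m d_{|x_{i-1},x_i|}(x_{i-1},x_i) : x = x_0, x_1, …, x_m = y }`. -/
noncomputable def limD (d : (n : ℕ) → T.S n → T.S n → ℝ) (x y : X) : ℝ :=
  sInf {r : ℝ | ∃ (m : ℕ) (c : ℕ → X), c 0 = x ∧ c m = y ∧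
    r = ∑ i ∈ Finset.range m, T.chainD d (c i) (c (i + 1))}

/-- A sequence of pseudometrics on the stages of the tower is monotone if
`d n ≤ d (n+1)` on `S n × S n`. -/
def MonotoneSeq (d : (n : ℕ) → T.S n → T.S n → ℝ) : Prop :=
  ∀ n (x y : T.S n),
    d n x y ≤ d (n + 1) (Set.inclusion (T.mono (Nat.le_succ n)) x)
      (Set.inclusion (T.mono (Nat.le_succ n)) y)

end UniformTower

/-- `d` is a pseudometric: it vanishes on the diagonal, is symmetric and satisfies
the triangle inequality. -/
def IsPseudometric {α : Type*} (d : α → α → ℝ) : Prop :=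
  (∀ x, d x x = 0) ∧ (∀ x y, d x y = d y x) ∧ (∀ x y z, d x z ≤ d x y + d y z)

/-- `d` is a uniform pseudometric on the uniform space `(α, u)`:
for every `ε > 0` the set `{d < ε}` is an entourage. -/
def IsUniformPseudometric {α : Type*} (u : UniformSpace α) (d : α → α → ℝ) : Prop :=
  IsPseudometric d ∧ ∀ ε : ℝ, 0 < ε → {p : α × α | d p.1 p.2 < ε} ∈ @uniformity α u

/-- A function `f : Z → Y` between uniform spaces is regular at a subset `A ⊆ Z` if for any
entourages `U` of `Y` and `V` of `Z` there is an entourage `W` of `Z` such that every point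
`x ∈ B(A;W)` admits a point `a ∈ A` with `(a,x) ∈ V` and `(f x, f a) ∈ U`. -/
def RegularAt {Z Y : Type*} (uZ : UniformSpace Z) (uY : UniformSpace Y)
    (f : Z → Y) (A : Set Z) : Prop :=
  ∀ U ∈ @uniformity Y uY, ∀ V ∈ @uniformity Z uZ, ∃ W ∈ @uniformity Z uZ,
    ∀ x : Z, (∃ a ∈ A, (x, a) ∈ W) → ∃ a ∈ A, (a, x) ∈ V ∧ (f x, f a) ∈ U



section Aux

open scoped Uniformity
open scoped SetRel

def SymmetricRel {α : Type*} (V : Set (α × α)) : Prop := Prod.swap ⁻¹' V = V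

lemma SymmetricRel.mk_mem_comm {α : Type*} {V : Set (α × α)} (hV : SymmetricRel V) {x y : α} :
    (x, y) ∈ V ↔ (y, x) ∈ V :=
  Set.ext_iff.1 hV (y, x)

lemma compRel_mono {α : Type*} {f g h k : Set (α × α)} (h₁ : f ⊆ h) (h₂ : g ⊆ k) :
    f ○ g ⊆ h ○ k :=
  SetRel.comp_subset_comp h₁ h₂

lemma comp_symm_mem_uniformity_sets' {α : Type*} [UniformSpace α] {s : Set (α × α)}
    (hs : s ∈ 𝓤 α) : ∃ t ∈ 𝓤 α, SymmetricRel t ∧ t ○ t ⊆ s := by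
  obtain ⟨t, ht, hts, htc⟩ := comp_symm_mem_uniformity_sets hs
  refine ⟨t, ht, ?_, htc⟩
  ext ⟨a, b⟩
  exact SetRel.comm (R := t) (a := b) (b := a)

namespace DL


noncomputable def wt (g : ℕ) : ℝ := (1/2 : ℝ) ^ g

lemma wt_pos (g : ℕ) : 0 < wt g := by unfold wt; positivity

lemma wt_le_one (g : ℕ) : wt g ≤ 1 := by
  unfold wt; exact pow_le_one₀ (by norm_num) (by norm_num)

lemma wt_anti {a b : ℕ} (h : a ≤ b) : wt b ≤ wt a := by
  unfold wt
  exact pow_le_pow_of_le_one (by norm_num) (by norm_num) h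

lemma wt_lt_iff {a b : ℕ} : wt a < wt b ↔ b < a := by
  unfold wt; exact pow_lt_pow_iff_right_of_lt_one₀ (by norm_num) (by norm_num)

lemma wt_le_of_lt {a b : ℕ} (h : wt a < wt b) : b + 1 ≤ a := wt_lt_iff.mp h

lemma wt_succ (g : ℕ) : wt (g+1) + wt (g+1) = wt g := by
  unfold wt; ring

lemma wt_ge_of_le {a b : ℕ} (h : wt a ≤ wt b) : b ≤ a := by
  by_contra hc
  push_neg at hc
  exact absurd (lt_of_le_of_lt h (wt_lt_iff.mpr hc)) (lt_irrefl _)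

lemma wt_mul (a b : ℕ) : wt (a + b) = wt a * wt b := by unfold wt; rw [pow_add]

/-- largest dyadic below a positive real ≤ 1 -/
lemma exists_best {σ : ℝ} (h0 : 0 < σ) (h1 : σ ≤ 1) : ∃ γ : ℕ, σ ≤ wt γ ∧ wt (γ + 1) < σ := by
  have hex : ∃ n : ℕ, (1/2 : ℝ) ^ n < σ := exists_pow_lt_of_lt_one h0 (by norm_num)
  classical
  set N := Nat.find hex with hN
  have hNp : (1/2 : ℝ) ^ N < σ := Nat.find_spec hex
  have hN0 : N ≠ 0 := by
    intro h
    rw [h] at hNp; simp at hNp; linarith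
  obtain ⟨γ, hγ⟩ := Nat.exists_eq_succ_of_ne_zero hN0
  rw [hγ] at hNp
  refine ⟨γ, ?_, hNp⟩
  have := Nat.find_min hex (m := γ) (by omega)
  push_neg at this
  exact this

/-- dependent choice of a sequence -/
lemma exists_seq {β : Type*} (P : ℕ → β → Prop) (Q : ℕ → β → β → Prop) (b0 : β) (h0 : P 0 b0)
    (hstep : ∀ n b, P n b → ∃ b', P (n+1) b' ∧ Q n b b') :
    ∃ f : ℕ → β, f 0 = b0 ∧ (∀ n, P n (f n)) ∧ ∀ n, Q n (f n) (f (n+1)) := by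
  classical
  let g : ∀ n : ℕ, {b : β // P n b} := fun n =>
    Nat.rec ⟨b0, h0⟩ (fun n ih =>
      ⟨Classical.choose (hstep n ih.1 ih.2), (Classical.choose_spec (hstep n ih.1 ih.2)).1⟩) n
  refine ⟨fun n => (g n).1, rfl, fun n => (g n).2, fun n => ?_⟩
  exact (Classical.choose_spec (hstep n (g n).1 (g n).2)).2

lemma pw_wt (m : ℕ) : (2:ℝ)^m * wt m = 1 := by
  unfold wt; rw [← mul_pow]; norm_num

lemma pw_le {m n : ℕ} (hmn : m ≤ n) : (2:ℝ)^m ≤ (2:ℝ)^n :=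
  pow_le_pow_right₀ one_le_two hmn

lemma pw_pos (m : ℕ) : (0:ℝ) < 2^m := by positivity

lemma pw_ge_one (m : ℕ) : (1:ℝ) ≤ 2^m := one_le_pow₀ one_le_two

lemma symmetric_inter_swap {α : Type*} (s : Set (α × α)) :
    SymmetricRel (s ∩ Prod.swap ⁻¹' s) := by
  apply Set.Subset.antisymm
  · rintro ⟨a, b⟩ ⟨h1, h2⟩
    exact ⟨h2, h1⟩
  · rintro ⟨a, b⟩ ⟨h1, h2⟩
    exact ⟨h2, h1⟩

section ChainComp

variable {Z : Type*}

lemma chain_anti (V : ℕ → Set (Z × Z)) (P : Set Z)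
    (hP : ∀ g, V g ⊆ P ×ˢ P)
    (hrefl : ∀ g, ∀ z ∈ P, (z, z) ∈ V g)
    (htr : ∀ g, (V (g+1) ○ V (g+1)) ○ V (g+1) ⊆ V g) :
    ∀ {a b : ℕ}, a ≤ b → V b ⊆ V a := by
  have hstep : ∀ g, V (g + 1) ⊆ V g := by
    intro g p hp
    obtain ⟨h1, h2⟩ := hP (g+1) hp
    exact htr g ⟨p.2, ⟨p.1, (hrefl (g+1) p.1 h1), (by simpa using hp)⟩, hrefl (g+1) p.2 h2⟩
  intro a b hab
  induction hab with
  | refl => exact subset_rfl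
  | step h ih => exact fun p hp => (by exact ih (hstep _ hp))

lemma chain_comp (V : ℕ → Set (Z × Z)) (P : Set Z)
    (hP : ∀ g, V g ⊆ P ×ˢ P)
    (hrefl : ∀ g, ∀ z ∈ P, (z, z) ∈ V g)
    (htr : ∀ g, (V (g+1) ○ V (g+1)) ○ V (g+1) ⊆ V g) :
    ∀ s : ℕ, ∀ (w : ℕ → Z) (gr : ℕ → ℕ) (t : ℕ),
      w 0 ∈ P →
      (∀ i, i < s → (w i, w (i+1)) ∈ V (gr i)) →
      (∑ i ∈ Finset.range s, wt (gr i)) ≤ wt (t+1) →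
      (w 0, w s) ∈ V t := by
  intro s
  induction s using Nat.strong_induction_on with
  | _ s IH =>
    intro w gr t hw0 hmem hsum
    rcases Nat.eq_zero_or_pos s with hs | hs
    · subst hs; exact hrefl t _ hw0
    -- all points in P
    have hmemP : ∀ i, i ≤ s → w i ∈ P := by
      intro i hi
      rcases Nat.lt_or_ge i s with h | h
      · exact (hP _ (hmem i h)).1
      · have hi' : i = s := le_antisymm hi h
        have hm := hmem (s-1) (by omega)
        have h2 := (hP _ hm).2
        rw [hi']
        simpa [Nat.sub_add_cancel hs] using h2
    have hterm : ∀ i, i < s → wt (gr i) ≤ wt (t+1) := by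
      intro i hi
      refine le_trans ?_ hsum
      refine Finset.single_le_sum (f := fun i => wt (gr i)) (fun j _ => (wt_pos _).le) ?_
      exact Finset.mem_range.mpr hi
    classical
    -- split point
    set A : ℕ → ℝ := fun j => ∑ i ∈ Finset.range j, wt (gr i) with hA
    set j := Nat.findGreatest (fun j => A j ≤ wt (t+2)) (s-1) with hj
    have hj0 : A 0 ≤ wt (t+2) := by simp [hA, (wt_pos _).le]
    have hjle : j ≤ s - 1 := Nat.findGreatest_le _
    have hjspec : A j ≤ wt (t+2) :=
      Nat.findGreatest_spec (P := fun j => A j ≤ wt (t+2)) (Nat.zero_le _) hj0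
    -- prefix
    have hpre : (w 0, w j) ∈ V (t+1) := by
      rcases Nat.eq_zero_or_pos j with h0 | h0
      · rw [h0]; exact hrefl _ _ hw0
      · exact IH j (by omega) w gr (t+1) hw0 (fun i hi => hmem i (by omega)) hjspec
    -- middle
    have hmid : (w j, w (j+1)) ∈ V (t+1) := by
      have := hterm j (by omega)
      have hgrj : t + 1 ≤ gr j := wt_ge_of_le this
      exact chain_anti V P hP hrefl htr hgrj (hmem j (by omega))
    -- suffix
    have hsuf : (w (j+1), w s) ∈ V (t+1) := by
      rcases Nat.lt_or_ge (j+1) s with hlt | hge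
      · -- nonempty suffix, sum < wt (t+2)
        have hnot : ¬ (A (j+1) ≤ wt (t+2)) := by
          exact Nat.findGreatest_is_greatest (P := fun j => A j ≤ wt (t+2)) (n := s-1)
            (k := j+1) (by omega) (by omega)
        push_neg at hnot
        have hsplit : A s = A (j+1) + ∑ i ∈ Finset.range (s - (j+1)), wt (gr (j+1+i)) := by
          rw [hA]
          have := Finset.sum_range_add (fun i => wt (gr i)) (j+1) (s - (j+1))
          simpa [Nat.add_sub_cancel' (le_of_lt hlt)] using this
        have hsufsum : ∑ i ∈ Finset.range (s - (j+1)), wt (gr (j+1+i)) ≤ wt (t+2) := by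
          have h1 : A s ≤ wt (t+1) := hsum
          have := wt_succ (t+1)
          nlinarith [hnot, hsplit]
        have := IH (s - (j+1)) (by omega) (fun i => w (j+1+i)) (fun i => gr (j+1+i)) (t+1)
          (hmemP (j+1) (by omega))
          (fun i hi => by
            have := hmem (j+1+i) (by omega)
            simpa [Nat.add_assoc] using this)
          hsufsum
        simpa [Nat.add_sub_cancel' (le_of_lt hlt)] using this
      · have : j + 1 = s := by omega
        rw [this]
        exact hrefl _ _ (hmemP s (le_refl _))
    exact htr t ⟨w (j+1), ⟨w j, hpre, hmid⟩, hsuf⟩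

end ChainComp


section ChainP

variable {Z : Type*} (step : Z → Z → ℕ → Prop) (wtf : Z → Z → ℕ → ℝ)

def chainP (F : ℝ) (p q : Z) : Prop :=
  ∃ (s : ℕ) (w : ℕ → Z) (gr : ℕ → ℕ), w 0 = p ∧ w s = q ∧
    (∀ i, i < s → step (w i) (w (i+1)) (gr i)) ∧
    ∑ i ∈ Finset.range s, wtf (w i) (w (i+1)) (gr i) ≤ F

lemma chainP_refl {F : ℝ} (hF : 0 ≤ F) (p : Z) : chainP step wtf F p p :=
  ⟨0, fun _ => p, fun _ => 0, rfl, rfl, by omega, by simpa using hF⟩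

lemma chainP_single {F : ℝ} {p q : Z} {g : ℕ} (hs : step p q g)
    (hF : wtf p q g ≤ F) : chainP step wtf F p q := by
  refine ⟨1, fun i => if i = 0 then p else q, fun _ => g, by simp, by simp, ?_, ?_⟩
  · intro i hi
    have : i = 0 := by omega
    subst this; simpa using hs
  · simpa using hF

lemma chainP_mono {F F' : ℝ} (hFF : F ≤ F') {p q : Z} (h : chainP step wtf F p q) :
    chainP step wtf F' p q := by
  obtain ⟨s, w, gr, h1, h2, h3, h4⟩ := h
  exact ⟨s, w, gr, h1, h2, h3, le_trans h4 hFF⟩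

lemma chainP_trans {F₁ F₂ : ℝ} {p q r : Z} (h₁ : chainP step wtf F₁ p q)
    (h₂ : chainP step wtf F₂ q r) : chainP step wtf (F₁ + F₂) p r := by
  obtain ⟨s₁, w₁, g₁, h11, h12, h13, h14⟩ := h₁
  obtain ⟨s₂, w₂, g₂, h21, h22, h23, h24⟩ := h₂
  refine ⟨s₁ + s₂, fun i => if i < s₁ then w₁ i else w₂ (i - s₁),
    fun i => if i < s₁ then g₁ i else g₂ (i - s₁), ?_, ?_, ?_, ?_⟩
  · rcases Nat.eq_zero_or_pos s₁ with h | h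
    · have hqp : w₂ 0 = p := by rw [h21, ← h12, h, h11]
      simp [h, hqp]
    · simp [h, h11]
  · have : ¬ (s₁ + s₂ < s₁) := by omega
    simp [this, h22]
  · intro i hi
    rcases Nat.lt_or_ge i s₁ with h | h
    · rcases Nat.lt_or_ge (i+1) s₁ with h' | h'
      · simpa [h, h'] using h13 i h
      · have hieq : i + 1 = s₁ := by omega
        have : w₂ ((i+1) - s₁) = w₁ (i+1) := by
          rw [hieq]; simp [h21, h12]
        simp only [if_pos h, if_neg (by omega : ¬ (i+1 < s₁))]
        rw [this]
        exact h13 i h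
    · have h' : ¬ (i < s₁) := by omega
      have h'' : ¬ (i + 1 < s₁) := by omega
      have : i + 1 - s₁ = (i - s₁) + 1 := by omega
      simp only [if_neg h', if_neg h'', this]
      exact h23 (i - s₁) (by omega)
  · have hsplit := Finset.sum_range_add
      (fun i => wtf (if i < s₁ then w₁ i else w₂ (i - s₁))
        (if i+1 < s₁ then w₁ (i+1) else w₂ (i+1 - s₁))
        (if i < s₁ then g₁ i else g₂ (i - s₁))) s₁ s₂
    rw [hsplit]
    have e1 : ∑ i ∈ Finset.range s₁,
        wtf (if i < s₁ then w₁ i else w₂ (i - s₁))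
          (if i+1 < s₁ then w₁ (i+1) else w₂ (i+1 - s₁))
          (if i < s₁ then g₁ i else g₂ (i - s₁))
        = ∑ i ∈ Finset.range s₁, wtf (w₁ i) (w₁ (i+1)) (g₁ i) := by
      refine Finset.sum_congr rfl ?_
      intro i hi
      have hi' : i < s₁ := Finset.mem_range.mp hi
      rcases Nat.lt_or_ge (i+1) s₁ with h' | h'
      · simp [hi', h']
      · have hieq : i + 1 = s₁ := by omega
        have : w₂ ((i+1) - s₁) = w₁ (i+1) := by rw [hieq]; simp [h21, h12]
        simp only [if_pos hi', if_neg (by omega : ¬ (i+1 < s₁)), this]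
    have e2 : ∑ i ∈ Finset.range s₂,
        wtf (if s₁ + i < s₁ then w₁ (s₁+i) else w₂ (s₁ + i - s₁))
          (if s₁ + i + 1 < s₁ then w₁ (s₁+i+1) else w₂ (s₁ + i + 1 - s₁))
          (if s₁ + i < s₁ then g₁ (s₁+i) else g₂ (s₁ + i - s₁))
        = ∑ i ∈ Finset.range s₂, wtf (w₂ i) (w₂ (i+1)) (g₂ i) := by
      refine Finset.sum_congr rfl ?_
      intro i hi
      have n1 : ¬ (s₁ + i < s₁) := by omega
      have n2 : ¬ (s₁ + i + 1 < s₁) := by omega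
      have e3 : s₁ + i - s₁ = i := by omega
      have e4 : s₁ + i + 1 - s₁ = i + 1 := by omega
      simp only [if_neg n1, if_neg n2, e3, e4]
    rw [e1, e2]
    exact add_le_add h14 h24

lemma chainP_symm (hstep : ∀ a b g, step a b g → step b a g)
    (hwtf : ∀ a b g, wtf a b g = wtf b a g)
    {F : ℝ} {p q : Z} (h : chainP step wtf F p q) : chainP step wtf F q p := by
  obtain ⟨s, w, gr, h1, h2, h3, h4⟩ := h
  refine ⟨s, fun i => w (s - i), fun i => gr (s - 1 - i), by simp [h2], by simp [h1], ?_, ?_⟩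
  · intro i hi
    have e1 : s - i = (s - 1 - i) + 1 := by omega
    have e2 : s - (i+1) = s - 1 - i := by omega
    show step (w (s - i)) (w (s - (i+1))) (gr (s - 1 - i))
    rw [e1, e2]
    exact hstep _ _ _ (h3 (s-1-i) (by omega))
  · calc ∑ i ∈ Finset.range s, wtf (w (s - i)) (w (s - (i+1))) (gr (s - 1 - i))
        = ∑ i ∈ Finset.range s, wtf (w (s - 1 - i + 1)) (w (s - 1 - i)) (gr (s - 1 - i)) := by
          refine Finset.sum_congr rfl ?_
          intro i hi
          have hi' : i < s := Finset.mem_range.mp hi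
          have e1 : s - i = (s - 1 - i) + 1 := by omega
          have e2 : s - (i+1) = s - 1 - i := by omega
          rw [e1, e2]
      _ = ∑ i ∈ Finset.range s, wtf (w (i + 1)) (w i) (gr i) := by
          exact Finset.sum_range_reflect (fun i => wtf (w (i+1)) (w i) (gr i)) s
      _ = ∑ i ∈ Finset.range s, wtf (w i) (w (i+1)) (gr i) := by
          refine Finset.sum_congr rfl fun i _ => (hwtf _ _ _).symm
      _ ≤ F := h4

end ChainP


end DL

namespace UniformTower

variable {X : Type u} (T : UniformTower X)

lemma height_le {x : X} {n : ℕ} (hx : x ∈ T.S n) : T.height x ≤ n :=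
  Nat.sInf_le hx

lemma u_eq_comap : ∀ {n m : ℕ} (hnm : n ≤ m),
    T.u n = UniformSpace.comap (Set.inclusion (T.mono hnm)) (T.u m) := by
  intro n m hnm
  induction hnm with
  | refl =>
    have he : Set.inclusion (T.mono (le_refl n)) = id := by
      funext x; exact Subtype.ext rfl
    rw [he, uniformSpace_comap_id, id]
  | @step m hm ih =>
    have he : Set.inclusion (T.mono (Nat.le_succ_of_le hm)) =
        (Set.inclusion (T.mono (Nat.le_succ m))) ∘ (Set.inclusion (T.mono hm)) := by
      funext x; exact Subtype.ext rfl
    rw [ih, T.compat m, he, UniformSpace.comap_comap]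

/-- relation on the subtype induced by a relation on `X` -/
def REL (n : ℕ) (R : Set (X × X)) : Set (T.S n × T.S n) := {p | (p.1.1, p.2.1) ∈ R}

/-- `R` restricted to stage `n` is an entourage of `T.u n`. -/
def IsEnt (n : ℕ) (R : Set (X × X)) : Prop := T.REL n R ∈ @uniformity _ (T.u n)

lemma IsEnt.mono' {n : ℕ} {R R' : Set (X × X)} (hR : T.IsEnt n R) (h : R ⊆ R') :
    T.IsEnt n R' :=
  Filter.mem_of_superset hR (fun p hp => h hp)

lemma IsEnt.inter {n : ℕ} {R R' : Set (X × X)} (hR : T.IsEnt n R) (hR' : T.IsEnt n R') :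
    T.IsEnt n (R ∩ R') := Filter.inter_mem hR hR'

lemma IsEnt.refl {n : ℕ} {R : Set (X × X)} (hR : T.IsEnt n R) {x : X} (hx : x ∈ T.S n) :
    (x, x) ∈ R :=
  @refl_mem_uniformity (T.S n) (T.u n) ⟨x, hx⟩ _ hR

lemma IsEnt.swap {n : ℕ} {R : Set (X × X)} (hR : T.IsEnt n R) :
    T.IsEnt n (Prod.swap ⁻¹' R) := by
  have h2 : Prod.swap ⁻¹' (T.REL n R) ∈ @uniformity _ (T.u n) :=
    mem_map.mp ((@tendsto_swap_uniformity _ (T.u n)) hR)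
  exact h2

lemma uniformity_stage {n m : ℕ} (hnm : n ≤ m) :
    @uniformity _ (T.u n) = Filter.comap
      (Prod.map (Set.inclusion (T.mono hnm)) (Set.inclusion (T.mono hnm)))
      (@uniformity _ (T.u m)) := by
  conv_lhs => rw [T.u_eq_comap hnm]
  exact @uniformity_comap _ _ (T.u m) _

lemma IsEnt.down {n m : ℕ} (hnm : n ≤ m) {R : Set (X × X)} (hR : T.IsEnt m R) :
    T.IsEnt n R := by
  rw [IsEnt, T.uniformity_stage hnm]
  exact Filter.preimage_mem_comap hR

/-- a relation on `X` induced by a relation on the subtype -/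
def XRel (n : ℕ) (D : Set (T.S n × T.S n)) : Set (X × X) :=
  {p | ∃ (h1 : p.1 ∈ T.S n) (h2 : p.2 ∈ T.S n), (⟨p.1, h1⟩, ⟨p.2, h2⟩) ∈ D}

lemma XRel_sub (n : ℕ) (D : Set (T.S n × T.S n)) : T.XRel n D ⊆ T.S n ×ˢ T.S n := by
  rintro ⟨a, b⟩ ⟨h1, h2, _⟩; exact ⟨h1, h2⟩

lemma XRel_comp (n : ℕ) (D D' : Set (T.S n × T.S n)) :
    T.XRel n D ○ T.XRel n D' ⊆ T.XRel n (D ○ D') := by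
  rintro ⟨a, b⟩ ⟨z, ⟨h1, h2, hD⟩, ⟨h2', h3, hD'⟩⟩
  refine ⟨h1, h3, ⟨⟨z, h2⟩, hD, ?_⟩⟩
  convert hD' using 2

lemma XRel_symm (n : ℕ) {D : Set (T.S n × T.S n)} (hD : SymmetricRel D) :
    SymmetricRel (T.XRel n D) := by
  have key : ∀ a b : X, (a, b) ∈ T.XRel n D → (b, a) ∈ T.XRel n D := by
    rintro a b ⟨h1, h2, hp⟩
    exact ⟨h2, h1, hD.mk_mem_comm.mp hp⟩
  apply Set.Subset.antisymm
  · rintro ⟨a, b⟩ hab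
    exact key b a hab
  · rintro ⟨a, b⟩ hab
    exact key a b hab

lemma XRel_isEnt {n : ℕ} {D : Set (T.S n × T.S n)} (hD : D ∈ @uniformity _ (T.u n)) :
    T.IsEnt n (T.XRel n D) := by
  refine Filter.mem_of_superset hD ?_
  rintro ⟨a, b⟩ hab
  exact ⟨a.2, b.2, by simpa using hab⟩

lemma XRel_rel_sub (n : ℕ) (R : Set (X × X)) : T.XRel n (T.REL n R) ⊆ R := by
  rintro ⟨a, b⟩ ⟨h1, h2, hp⟩; exact hp

lemma XRel_mono (n : ℕ) {D D' : Set (T.S n × T.S n)} (h : D ⊆ D') :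
    T.XRel n D ⊆ T.XRel n D' := by
  rintro ⟨a, b⟩ ⟨h1, h2, hp⟩; exact ⟨h1, h2, h hp⟩

/-- symmetric square root of an entourage-relation -/
lemma symm_sq {n : ℕ} {R : Set (X × X)} (hR : T.IsEnt n R) :
    ∃ R', T.IsEnt n R' ∧ SymmetricRel R' ∧ R' ⊆ T.S n ×ˢ T.S n ∧
      R' ○ R' ⊆ R ∧ R' ⊆ R := by
  obtain ⟨t, ht, htsymm, htcomp⟩ := @comp_symm_mem_uniformity_sets' _ (T.u n) _ hR
  have htsub : t ⊆ T.REL n R := fun p hp =>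
    htcomp ⟨p.2, hp, @refl_mem_uniformity _ (T.u n) p.2 _ ht⟩
  refine ⟨T.XRel n t, T.XRel_isEnt ht, T.XRel_symm n htsymm, T.XRel_sub n t, ?_, ?_⟩
  · exact subset_trans (T.XRel_comp n t t) (subset_trans (T.XRel_mono n htcomp)
      (T.XRel_rel_sub n R))
  · exact subset_trans (T.XRel_mono n htsub) (T.XRel_rel_sub n R)

/-- symmetric cube root of an entourage-relation -/
lemma symm_cube {n : ℕ} {R : Set (X × X)} (hR : T.IsEnt n R) :
    ∃ R', T.IsEnt n R' ∧ SymmetricRel R' ∧ R' ⊆ T.S n ×ˢ T.S n ∧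
      (R' ○ R') ○ R' ⊆ R ∧ R' ⊆ R := by
  obtain ⟨t1, ht1, ht1symm, ht1comp⟩ := @comp_symm_mem_uniformity_sets' _ (T.u n) _ hR
  obtain ⟨t2, ht2, ht2symm, ht2comp⟩ := @comp_symm_mem_uniformity_sets' _ (T.u n) _ ht1
  have ht2sub : t2 ⊆ t1 := fun p hp =>
    ht2comp ⟨p.2, hp, @refl_mem_uniformity _ (T.u n) p.2 _ ht2⟩
  have hcube : (t2 ○ t2) ○ t2 ⊆ T.REL n R := by
    intro p hp
    obtain ⟨z, hz1, hz2⟩ := hp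
    exact ht1comp ⟨z, ht2comp hz1, ht2sub hz2⟩
  have htsub : t2 ⊆ T.REL n R := fun p hp => by
    have h1 : (p.1, p.2) ∈ t1 := ht2sub hp
    exact ht1comp ⟨p.2, h1, @refl_mem_uniformity _ (T.u n) p.2 _ ht1⟩
  refine ⟨T.XRel n t2, T.XRel_isEnt ht2, T.XRel_symm n ht2symm, T.XRel_sub n t2, ?_, ?_⟩
  · refine subset_trans (compRel_mono (T.XRel_comp n t2 t2) (subset_refl _)) ?_
    exact subset_trans (T.XRel_comp n _ _)
      (subset_trans (T.XRel_mono n hcube) (T.XRel_rel_sub n R))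
  · exact subset_trans (T.XRel_mono n htsub) (T.XRel_rel_sub n R)

/-- upward extension of a stage-`n` entourage-relation to stage `m` -/
lemma ent_up {n m : ℕ} (hnm : n ≤ m) {R : Set (X × X)} (hR : T.IsEnt n R) :
    ∃ R', T.IsEnt m R' ∧ SymmetricRel R' ∧ R' ⊆ T.S m ×ˢ T.S m ∧
      R' ∩ (T.S n ×ˢ T.S n) ⊆ R := by
  rw [IsEnt, T.uniformity_stage hnm] at hR
  obtain ⟨E, hE, hEsub⟩ := hR
  obtain ⟨E', hE', hE'symm, hE'sub, _, hE'subE⟩ := T.symm_sq (T.XRel_isEnt hE)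
  refine ⟨E', hE', hE'symm, hE'sub, ?_⟩
  rintro ⟨a, b⟩ ⟨hab, ha, hb⟩
  obtain ⟨h1, h2, hE2⟩ := hE'subE hab
  have hmem : (Prod.map (Set.inclusion (T.mono hnm)) (Set.inclusion (T.mono hnm)))
      (⟨⟨a, ha⟩, ⟨b, hb⟩⟩) ∈ E := by
    convert hE2 using 2 <;> rfl
  exact hEsub hmem

end UniformTower

/-- symmetric cube root in a plain uniform space -/
lemma cube_mem {α : Type*} [UniformSpace α] {s : Set (α × α)} (hs : s ∈ 𝓤 α) :
    ∃ t ∈ 𝓤 α, SymmetricRel t ∧ (t ○ t) ○ t ⊆ s ∧ t ⊆ s := by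
  obtain ⟨t1, ht1, ht1symm, ht1comp⟩ := comp_symm_mem_uniformity_sets' hs
  obtain ⟨t2, ht2, ht2symm, ht2comp⟩ := comp_symm_mem_uniformity_sets' ht1
  have ht2sub : t2 ⊆ t1 := fun p hp =>
    ht2comp ⟨p.2, hp, refl_mem_uniformity ht2⟩
  refine ⟨t2, ht2, ht2symm, ?_, ?_⟩
  · rintro ⟨a, b⟩ ⟨z, hz1, hz2⟩
    exact ht1comp ⟨z, ht2comp hz1, ht2sub hz2⟩
  · intro p hp
    exact ht1comp ⟨p.2, ht2sub hp, refl_mem_uniformity ht1⟩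


set_option maxHeartbeats 1600000 in
open DL UniformTower in
theorem cont_key {X Y : Type u} (TX : UniformTower X) (TY : UniformTower Y) (h : X → Y)
    (hcont : ∀ m : ℕ, @Continuous _ _ (TX.u (m + 1)).toTopologicalSpace
      TY.dirLim.toTopologicalSpace (fun z : TX.S (m + 1) => h z.val))
    (hreg : ∀ m : ℕ, RegularAt (TX.u (m + 1)) TY.dirLim (fun z : TX.S (m + 1) => h z.val)
      {z : TX.S (m + 1) | z.val ∈ TX.S m}) :
    @Continuous X Y TX.dirLim.toTopologicalSpace TY.dirLim.toTopologicalSpace h := by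
  letI uY : UniformSpace Y := TY.dirLim
  letI tX : TopologicalSpace X := TX.dirLim.toTopologicalSpace
  rw [continuous_iff_continuousAt]
  intro x₀
  rw [continuousAt_def]
  intro N hN
  obtain ⟨U, hUent, hUN⟩ := UniformSpace.mem_nhds_iff.mp hN
  obtain ⟨m₀, hx₀⟩ : ∃ m, x₀ ∈ TX.S (m + 1) :=
    ⟨TX.height x₀, TX.mono (Nat.le_succ _) (TX.mem_S_height x₀)⟩
  set n₀ := m₀ + 1 with hn₀def
  set C := 5 * n₀ + 12 with hCdef
  -- Y-side graded entourages
  obtain ⟨U₀, hU₀mem, hU₀symm, hU₀cube, hU₀sub⟩ := cube_mem hUent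
  obtain ⟨Uh, hUh0, hUhP, hUhQ⟩ := DL.exists_seq
    (fun _ V => V ∈ 𝓤 Y ∧ SymmetricRel V)
    (fun _ V V' => (V' ○ V') ○ V' ⊆ V ∧ V' ⊆ V)
    U₀ ⟨hU₀mem, hU₀symm⟩
    (fun n V hV => by
      obtain ⟨t, ht, hts, htc, hsub⟩ := cube_mem hV.1
      exact ⟨t, ⟨ht, hts⟩, htc, hsub⟩)
  have hUhent : ∀ g, Uh g ∈ 𝓤 Y := fun g => (hUhP g).1
  have hUhsymm : ∀ g, SymmetricRel (Uh g) := fun g => (hUhP g).2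
  have hUhcube : ∀ g, (Uh (g+1) ○ Uh (g+1)) ○ Uh (g+1) ⊆ Uh g := fun g => (hUhQ g).1
  have hUhU : ∀ g, Uh g ⊆ U := by
    intro g
    induction g with
    | zero => rw [hUh0]; exact hU₀sub
    | succ n ih => exact subset_trans (hUhQ n).2 ih
  -- continuity at x₀ within stage n₀
  letI uXn : UniformSpace (TX.S n₀) := TX.u n₀
  letI tXn : TopologicalSpace (TX.S n₀) := uXn.toTopologicalSpace
  have hball1 : UniformSpace.ball (h x₀) (Uh 1) ∈ 𝓝 (h x₀) :=
    UniformSpace.ball_mem_nhds _ (hUhent 1)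
  have hca : ContinuousAt (fun z : TX.S n₀ => h z.val) ⟨x₀, hx₀⟩ :=
    (hcont m₀).continuousAt
  have hpre := hca.preimage_mem_nhds hball1
  obtain ⟨E, hEmem, hEball⟩ := UniformSpace.mem_nhds_iff.mp hpre
  have hΘent : TX.IsEnt n₀ (TX.XRel n₀ E) := TX.XRel_isEnt hEmem
  have hΘkey : ∀ u' : X, (x₀, u') ∈ TX.XRel n₀ E → (h x₀, h u') ∈ Uh 1 := by
    rintro u' ⟨h1, h2, hp⟩
    have hmem : (⟨u', h2⟩ : TX.S n₀) ∈ UniformSpace.ball (⟨x₀, hx₀⟩ : TX.S n₀) E := by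
      show ((⟨x₀, hx₀⟩ : TX.S n₀), (⟨u', h2⟩ : TX.S n₀)) ∈ E
      convert hp using 2
    exact hEball hmem
  -- Λ family at stage n₀
  obtain ⟨Λ₀, hΛ₀ent, hΛ₀symm, hΛ₀sub, _, hΛ₀Θ⟩ := TX.symm_cube hΘent
  obtain ⟨Lam, hLam0, hLamP, hLamQ⟩ := DL.exists_seq
    (fun _ L => TX.IsEnt n₀ L ∧ SymmetricRel L ∧ L ⊆ TX.S n₀ ×ˢ TX.S n₀ ∧
      L ⊆ TX.XRel n₀ E)
    (fun _ L L' => (L' ○ L') ○ L' ⊆ L ∧ L' ⊆ L)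
    Λ₀ ⟨hΛ₀ent, hΛ₀symm, hΛ₀sub, hΛ₀Θ⟩
    (fun n L hL => by
      obtain ⟨t, ht, hts, htsub, htc, hsub⟩ := TX.symm_cube hL.1
      exact ⟨t, ⟨ht, hts, htsub, subset_trans hsub hL.2.2.2⟩, htc, hsub⟩)
  have hLament : ∀ g, TX.IsEnt n₀ (Lam g) := fun g => (hLamP g).1
  have hLamsymm : ∀ g, SymmetricRel (Lam g) := fun g => (hLamP g).2.1
  have hLamsub : ∀ g, Lam g ⊆ TX.S n₀ ×ˢ TX.S n₀ := fun g => (hLamP g).2.2.1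
  have hLamΘ : ∀ g, Lam g ⊆ TX.XRel n₀ E := fun g => (hLamP g).2.2.2
  have hLamcube : ∀ g, (Lam (g+1) ○ Lam (g+1)) ○ Lam (g+1) ⊆ Lam g := fun g => (hLamQ g).1
  -- stage families above n₀
  have stage_step : ∀ (k : ℕ) (f : ℕ → Set (X × X)),
      (∀ g, TX.IsEnt (n₀ + k) (f g) ∧ SymmetricRel (f g) ∧
        f g ⊆ TX.S (n₀ + k) ×ˢ TX.S (n₀ + k) ∧
        ((f (g+1) ○ f (g+1)) ○ f (g+1) ⊆ f g) ∧ f (g+1) ⊆ f g) →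
      ∃ f' : ℕ → Set (X × X),
        (∀ g, TX.IsEnt (n₀ + (k+1)) (f' g) ∧ SymmetricRel (f' g) ∧
          f' g ⊆ TX.S (n₀ + (k+1)) ×ˢ TX.S (n₀ + (k+1)) ∧
          ((f' (g+1) ○ f' (g+1)) ○ f' (g+1) ⊆ f' g) ∧ f' (g+1) ⊆ f' g) ∧
        ((∀ g, f' g ∩ (TX.S (n₀ + k) ×ˢ TX.S (n₀ + k)) ⊆ f g) ∧
         (∀ g x u', x ∈ TX.S (n₀ + k + 1) → u' ∈ TX.S (n₀ + k) → (u', x) ∈ f' (g+1) →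
           ∃ a ∈ TX.S (n₀ + k), (u', a) ∈ f g ∧ (h x, h a) ∈ Uh (g+1))) := by
    intro k f hf
    have hle1 : n₀ + k ≤ n₀ + k + 1 := Nat.le_succ _
    -- inner recursion over grades
    obtain ⟨F, hF0, hFP, hFQ⟩ := DL.exists_seq
      (fun g R => TX.IsEnt (n₀ + k + 1) R ∧ SymmetricRel R ∧
        R ⊆ TX.S (n₀ + k + 1) ×ˢ TX.S (n₀ + k + 1) ∧
        (R ∩ (TX.S (n₀ + k) ×ˢ TX.S (n₀ + k)) ⊆ f g) ∧
        (∀ g', g = g' + 1 → ∀ x u', x ∈ TX.S (n₀ + k + 1) → u' ∈ TX.S (n₀ + k) →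
          (u', x) ∈ R → ∃ a ∈ TX.S (n₀ + k), (u', a) ∈ f g' ∧ (h x, h a) ∈ Uh g))
      (fun _ R R' => ((R' ○ R') ○ R' ⊆ R) ∧ R' ⊆ R)
      (Classical.choose (TX.ent_up hle1 (hf 0).1))
      (by
        obtain ⟨h1, h2, h3, h4⟩ := Classical.choose_spec (TX.ent_up hle1 (hf 0).1)
        exact ⟨h1, h2, h3, h4, fun g' hg' => by omega⟩)
      (by
        intro g R hR
        -- extensions of f g and f (g+1)
        obtain ⟨Eg, hEg1, hEg2, hEg3, hEg4⟩ := TX.ent_up hle1 (hf g).1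
        obtain ⟨E₂, hE₂1, hE₂2, hE₂3, hE₂4⟩ := TX.ent_up hle1 (hf (g+1)).1
        obtain ⟨Ξ, hΞ1, hΞ2, hΞ3, hΞ4, hΞ5⟩ := TX.symm_sq hEg1
        -- regularity at stage n₀ + k + 1
        obtain ⟨W, hWmem, hWprop⟩ := hreg (n₀ + k) (Uh (g+1)) (hUhent (g+1))
          (TX.REL (n₀ + k + 1) Ξ) hΞ1
        set Wrel : Set (X × X) := {p | ∃ (h2 : p.2 ∈ TX.S (n₀ + k + 1))
          (h1 : p.1 ∈ TX.S (n₀ + k + 1)), ((⟨p.2, h2⟩ : TX.S (n₀ + k + 1)), ⟨p.1, h1⟩) ∈ W}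
          with hWreldef
        have hWrelent : TX.IsEnt (n₀ + k + 1) Wrel := by
          refine Filter.mem_of_superset
            (mem_map.mp ((@tendsto_swap_uniformity _ (TX.u (n₀ + k + 1))) hWmem)) ?_
          rintro ⟨p1, p2⟩ hp
          exact ⟨p2.2, p1.2, hp⟩
        obtain ⟨Tc, hTc1, hTc2, hTc3, hTc4, hTc5⟩ := TX.symm_cube hR.1
        have hs₀ent : TX.IsEnt (n₀ + k + 1) (Tc ∩ (Ξ ∩ (Wrel ∩ E₂))) :=
          UniformTower.IsEnt.inter TX hTc1 (UniformTower.IsEnt.inter TX hΞ1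
            (UniformTower.IsEnt.inter TX hWrelent hE₂1))
        have hsubTc : (Tc ∩ (Ξ ∩ (Wrel ∩ E₂))) ∩
            Prod.swap ⁻¹' (Tc ∩ (Ξ ∩ (Wrel ∩ E₂))) ⊆ Tc := fun p hp => hp.1.1
        refine ⟨(Tc ∩ (Ξ ∩ (Wrel ∩ E₂))) ∩ Prod.swap ⁻¹' (Tc ∩ (Ξ ∩ (Wrel ∩ E₂))),
          ⟨UniformTower.IsEnt.inter TX hs₀ent (UniformTower.IsEnt.swap TX hs₀ent),
          DL.symmetric_inter_swap _, ?_, ?_, ?_⟩, ?_, ?_⟩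
        · exact fun p hp => hΞ3 hp.1.2.1
        · exact fun p hp => hE₂4 ⟨hp.1.1.2.2.2, hp.2⟩
        · rintro g' hg' x u' hx hu' hux
          have hg'' : g' = g := by omega
          subst hg''
          have huxΞ : (u', x) ∈ Ξ := hux.1.2.1
          have huxW : (u', x) ∈ Wrel := hux.1.2.2.1
          rw [hWreldef] at huxW
          obtain ⟨hx2, hu1, hW2⟩ := huxW
          obtain ⟨a, haA, haV, haU⟩ := hWprop ⟨x, hx2⟩ ⟨⟨u', hu1⟩, hu', hW2⟩
          refine ⟨a.1, haA, ?_, haU⟩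
          have h3 : (x, a.1) ∈ Ξ := hΞ2.mk_mem_comm.mp haV
          have h5 : (u', a.1) ∈ Eg := hΞ4 ⟨x, huxΞ, h3⟩
          exact hEg4 ⟨h5, hu', haA⟩
        · exact subset_trans (compRel_mono (compRel_mono hsubTc hsubTc) hsubTc) hTc4
        · exact fun p hp => hTc5 (hp.1.1))
    refine ⟨F, ?_, ?_, ?_⟩
    · intro g
      exact ⟨(hFP g).1, (hFP g).2.1, (hFP g).2.2.1, (hFQ g).1, (hFQ g).2⟩
    · intro g
      exact (hFP g).2.2.2.1
    · intro g x u' hx hu' hux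
      exact (hFP (g+1)).2.2.2.2 g rfl x u' hx hu' hux
  -- outer recursion over stages
  obtain ⟨FAM, hFAM0, hFAMP, hFAMQ⟩ := DL.exists_seq
    (fun k f => ∀ g, TX.IsEnt (n₀ + k) (f g) ∧ SymmetricRel (f g) ∧
      f g ⊆ TX.S (n₀ + k) ×ˢ TX.S (n₀ + k) ∧
      ((f (g+1) ○ f (g+1)) ○ f (g+1) ⊆ f g) ∧ f (g+1) ⊆ f g)
    (fun k f f' => (∀ g, f' g ∩ (TX.S (n₀ + k) ×ˢ TX.S (n₀ + k)) ⊆ f g) ∧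
      (∀ g x u', x ∈ TX.S (n₀ + k + 1) → u' ∈ TX.S (n₀ + k) → (u', x) ∈ f' (g+1) →
        ∃ a ∈ TX.S (n₀ + k), (u', a) ∈ f g ∧ (h x, h a) ∈ Uh (g+1)))
    Lam
    (by
      intro g
      refine ⟨?_, ?_, ?_, ?_, ?_⟩
      · simpa using hLament g
      · simpa using hLamsymm g
      · simpa using hLamsub g
      · simpa using hLamcube g
      · intro p hp
        have h1 := (hLamsub (g+1)) hp
        exact hLamcube g ⟨p.2, ⟨p.1, UniformTower.IsEnt.refl TX (hLament (g+1)) h1.1,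
          by simpa using hp⟩, UniformTower.IsEnt.refl TX (hLament (g+1)) h1.2⟩)
    stage_step
  -- the global graded family
  set Ω : ℕ → ℕ → Set (X × X) := fun k g =>
    if k ≤ n₀ then Lam g ∩ (TX.S k ×ˢ TX.S k) else FAM (k - n₀) g with hΩdef
  -- basic rewriting lemmas for Ω
  have hΩle : ∀ k g, k ≤ n₀ → Ω k g = Lam g ∩ (TX.S k ×ˢ TX.S k) := by
    intro k g hk; simp [hΩdef, hk]
  have hΩgt : ∀ k g, ¬ k ≤ n₀ → Ω k g = FAM (k - n₀) g := by
    intro k g hk; simp [hΩdef, hk]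
  have hFAMP' : ∀ k, n₀ < k → ∀ g,
      TX.IsEnt k (FAM (k - n₀) g) ∧ SymmetricRel (FAM (k - n₀) g) ∧
      FAM (k - n₀) g ⊆ TX.S k ×ˢ TX.S k ∧
      ((FAM (k-n₀) (g+1) ○ FAM (k-n₀) (g+1)) ○ FAM (k-n₀) (g+1) ⊆ FAM (k-n₀) g) ∧
      FAM (k-n₀) (g+1) ⊆ FAM (k-n₀) g := by
    intro k hk g
    have e : n₀ + (k - n₀) = k := by omega
    have hp := hFAMP (k - n₀) g
    rw [e] at hp
    exact hp
  have hΩent : ∀ k g, TX.IsEnt k (Ω k g) := by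
    intro k g
    by_cases hk : k ≤ n₀
    · rw [hΩle k g hk]
      refine Filter.mem_of_superset (UniformTower.IsEnt.down TX hk (hLament g)) ?_
      exact fun p hp => ⟨hp, p.1.2, p.2.2⟩
    · rw [hΩgt k g hk]
      exact (hFAMP' k (by omega) g).1
  have hΩsymm : ∀ k g, SymmetricRel (Ω k g) := by
    intro k g
    by_cases hk : k ≤ n₀
    · rw [hΩle k g hk]
      apply Set.Subset.antisymm
      · rintro ⟨a, b⟩ ⟨h1, h2, h3⟩
        exact ⟨(hLamsymm g).mk_mem_comm.mp h1, h3, h2⟩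
      · rintro ⟨a, b⟩ ⟨h1, h2, h3⟩
        exact ⟨(hLamsymm g).mk_mem_comm.mp h1, h3, h2⟩
    · rw [hΩgt k g hk]
      exact (hFAMP' k (by omega) g).2.1
  have hΩsub : ∀ k g, Ω k g ⊆ TX.S k ×ˢ TX.S k := by
    intro k g
    by_cases hk : k ≤ n₀
    · rw [hΩle k g hk]; exact fun p hp => hp.2
    · rw [hΩgt k g hk]; exact (hFAMP' k (by omega) g).2.2.1
  have hΩcube : ∀ k g, (Ω k (g+1) ○ Ω k (g+1)) ○ Ω k (g+1) ⊆ Ω k g := by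
    intro k g
    by_cases hk : k ≤ n₀
    · rw [hΩle k (g+1) hk, hΩle k g hk]
      rintro ⟨a, b⟩ ⟨z, ⟨z', ⟨hz'1, hz'2⟩, ⟨hz1, hz2⟩⟩, ⟨hb1, hb2⟩⟩
      refine ⟨hLamcube g ⟨z, ⟨z', hz'1, hz1⟩, hb1⟩, hz'2.1, hb2.2⟩
    · rw [hΩgt k (g+1) hk, hΩgt k g hk]
      exact (hFAMP' k (by omega) g).2.2.2.1
  have hΩrefl : ∀ k g x, x ∈ TX.S k → (x, x) ∈ Ω k g :=
    fun k g x hx => UniformTower.IsEnt.refl TX (hΩent k g) hx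
  have hΩdown : ∀ k g, Ω (k+1) g ∩ (TX.S k ×ˢ TX.S k) ⊆ Ω k g := by
    intro k g
    by_cases hk1 : k + 1 ≤ n₀
    · have hk : k ≤ n₀ := by omega
      rw [hΩle (k+1) g hk1, hΩle k g hk]
      rintro p ⟨⟨hL, _⟩, hS⟩
      exact ⟨hL, hS⟩
    · by_cases hk : k ≤ n₀
      · have hkeq : k = n₀ := by omega
        subst hkeq
        rw [hΩgt (n₀+1) g hk1, hΩle n₀ g le_rfl]
        have e1 : n₀ + 1 - n₀ = 1 := by omega
        rw [e1]
        have hq := (hFAMQ 0).1 g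
        rw [hFAM0] at hq
        have e2 : n₀ + 0 = n₀ := by omega
        rw [e2] at hq
        intro p hp
        exact ⟨hq hp, hp.2⟩
      · have hkgt : n₀ < k := by omega
        rw [hΩgt (k+1) g (by omega), hΩgt k g hk]
        have hq := (hFAMQ (k - n₀)).1 g
        have e2 : n₀ + (k - n₀) = k := by omega
        rw [e2] at hq
        have e3 : k + 1 - n₀ = (k - n₀) + 1 := by omega
        rw [e3]
        exact hq
  have hΩF4 : ∀ k g x u', n₀ ≤ k → x ∈ TX.S (k+1) → u' ∈ TX.S k →
      (u', x) ∈ Ω (k+1) (g+1) →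
      ∃ a ∈ TX.S k, (u', a) ∈ Ω k g ∧ (h x, h a) ∈ Uh (g+1) := by
    intro k g x u' hk hx hu' hux
    have hq := (hFAMQ (k - n₀)).2 g x u'
    have e2 : n₀ + (k - n₀) = k := by omega
    rw [e2] at hq
    rw [hΩgt (k+1) (g+1) (by omega)] at hux
    have e3 : k + 1 - n₀ = (k - n₀) + 1 := by omega
    rw [e3] at hux
    obtain ⟨a, ha, hua, hha⟩ := hq hx hu' hux
    refine ⟨a, ha, ?_, hha⟩
    by_cases hkn : k ≤ n₀
    · have : k = n₀ := by omega
      subst this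
      rw [hΩle n₀ g le_rfl]
      simp only [Nat.sub_self] at hua
      rw [hFAM0] at hua
      exact ⟨hua, hu', ha⟩
    · rw [hΩgt k g hkn]
      exact hua
  have hΩlow : ∀ k g, k ≤ n₀ → Ω k g ⊆ Lam g := by
    intro k g hk
    rw [hΩle k g hk]
    exact fun p hp => hp.1
  -- the chain structures on X
  set stepX : X → X → ℕ → Prop :=
    fun a b g => (a, b) ∈ Ω (max (TX.height a) (TX.height b)) g with hstepXdef
  set wtfX : X → X → ℕ → ℝ :=
    fun a b g => (2:ℝ)^(5 * max (TX.height a) (TX.height b)) * DL.wt g with hwtfXdef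
  set Dset : ℕ → Set (X × X) :=
    fun t => {p | DL.chainP stepX wtfX (DL.wt t) p.1 p.2} with hDdef
  have hstepsymm : ∀ a b g, stepX a b g → stepX b a g := by
    intro a b g hab
    rw [hstepXdef] at hab ⊢
    simp only at hab ⊢
    rw [max_comm]
    exact (hΩsymm _ _).mk_mem_comm.mp hab
  have hwtfsymm : ∀ a b g, wtfX a b g = wtfX b a g := by
    intro a b g
    rw [hwtfXdef]
    simp only
    rw [max_comm]
  have hwtfpos : ∀ a b g, 0 < wtfX a b g := by
    intro a b g
    rw [hwtfXdef]
    exact mul_pos (DL.pw_pos _) (DL.wt_pos _)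
  have hDmem : ∀ t (p : X × X), p ∈ Dset t ↔ DL.chainP stepX wtfX (DL.wt t) p.1 p.2 := by
    intro t p
    rw [hDdef]
    exact Iff.rfl
  have hDcompsub : ∀ t, Dset (t+1) ○ Dset (t+1) ⊆ Dset t := by
    intro t
    rintro ⟨a, b⟩ ⟨z, h1, h2⟩
    rw [hDmem] at h1 h2 ⊢
    have := DL.chainP_trans stepX wtfX h1 h2
    rw [DL.wt_succ] at this
    exact this
  have hDsymmsub : ∀ t (p : X × X), p ∈ Dset t → (p.2, p.1) ∈ Dset t := by
    intro t p hp
    rw [hDmem] at hp ⊢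
    exact DL.chainP_symm stepX wtfX hstepsymm hwtfsymm hp
  have hDmemiInf : ∀ t, Dset t ∈ ⨅ t', 𝓟 (Dset t') :=
    fun t => (iInf_le (fun t' => 𝓟 (Dset t')) t) (mem_principal_self _)
  set u' : UniformSpace X := UniformSpace.ofCore
    { uniformity := ⨅ t, 𝓟 (Dset t)
      refl := by
        refine le_iInf fun t => ?_
        rw [Filter.le_principal_iff, Filter.mem_principal]
        rintro ⟨a, b⟩ hab
        have : a = b := hab
        subst this
        rw [hDmem]
        exact DL.chainP_refl stepX wtfX (DL.wt_pos t).le a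
      symm := by
        rw [Filter.tendsto_iInf]
        intro t
        rw [Filter.tendsto_principal]
        refine Filter.mem_of_superset (hDmemiInf t) ?_
        intro p hp
        exact hDsymmsub t p hp
      comp := by
        refine le_iInf fun t => ?_
        rw [Filter.le_principal_iff]
        exact Filter.mem_of_superset (Filter.mem_lift' (hDmemiInf (t+1))) (hDcompsub t) }
    with hu'def
  have hu'uni : @uniformity X u' = ⨅ t, 𝓟 (Dset t) := rfl
  -- entourage extension: each Dset is an entourage at every stage
  have hDent : ∀ n t, TX.REL n (Dset t) ∈ @uniformity _ (TX.u n) := by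
    intro n t
    have hext : ∀ m : ℕ, ∃ R', TX.IsEnt n R' ∧
        (m ≤ n → R' ∩ (TX.S m ×ˢ TX.S m) ⊆ Ω m (t + 5*n + 1)) := by
      intro m
      by_cases hm : m ≤ n
      · obtain ⟨R', h1, _, _, h4⟩ := TX.ent_up hm (hΩent m (t + 5*n + 1))
        exact ⟨R', h1, fun _ => h4⟩
      · exact ⟨Set.univ, Filter.univ_mem, fun hmn => absurd hmn hm⟩
    choose Rex hRex1 hRex2 using hext
    have hEmem : (⋂ m ∈ Finset.range (n+1), TX.REL n (Rex m)) ∈ @uniformity _ (TX.u n) := by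
      rw [Filter.biInter_finset_mem]
      exact fun m _ => hRex1 m
    refine Filter.mem_of_superset hEmem ?_
    rintro ⟨p1, p2⟩ hp
    set m := max (TX.height (p1 : X)) (TX.height (p2 : X)) with hm
    have hmn : m ≤ n := max_le (TX.height_le p1.2) (TX.height_le p2.2)
    have hpm : ((p1 : X), (p2 : X)) ∈ Rex m :=
      Set.mem_iInter₂.mp hp m (Finset.mem_range.mpr (by omega))
    have hq1 : (p1 : X) ∈ TX.S m := TX.mono (le_max_left _ _) (TX.mem_S_height _)
    have hq2 : (p2 : X) ∈ TX.S m := TX.mono (le_max_right _ _) (TX.mem_S_height _)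
    have hstep : ((p1 : X), (p2 : X)) ∈ Ω m (t + 5*n + 1) := hRex2 m hmn ⟨hpm, hq1, hq2⟩
    show ((p1 : X), (p2 : X)) ∈ Dset t
    rw [hDmem]
    refine DL.chainP_single stepX wtfX (g := t + 5*n + 1) ?_ ?_
    · rw [hstepXdef]; exact hstep
    · rw [hwtfXdef]
      simp only
      have e1 : DL.wt (t + 5*n + 1) = DL.wt (5*n) * DL.wt (t+1) := by
        rw [← DL.wt_mul]
        congr 1
        omega
      rw [e1]
      have h2 : (2:ℝ)^(5 * m) ≤ (2:ℝ)^(5*n) := DL.pw_le (by omega)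
      calc (2:ℝ)^(5 * m) * (DL.wt (5*n) * DL.wt (t+1))
          ≤ (2:ℝ)^(5 * n) * (DL.wt (5*n) * DL.wt (t+1)) := by
            refine mul_le_mul_of_nonneg_right h2 ?_
            exact (mul_pos (DL.wt_pos _) (DL.wt_pos _)).le
        _ = DL.wt (t+1) := by rw [← mul_assoc, DL.pw_wt, one_mul]
        _ ≤ DL.wt t := DL.wt_anti (Nat.le_succ t)
  -- uniform continuity of the stage inclusions into u'
  have huc : u' ∈ {v : UniformSpace X |
      ∀ n, @UniformContinuous _ _ (TX.u n) v (Subtype.val : TX.S n → X)} := by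
    intro n
    show Filter.Tendsto _ (@uniformity _ (TX.u n)) (@uniformity X u')
    rw [hu'uni, Filter.tendsto_iInf]
    intro t
    rw [Filter.tendsto_principal]
    exact Filter.mem_of_superset (hDent n t) (fun p hp => hp)
  have hle : TX.dirLim ≤ u' := sInf_le huc
  -- THE MAIN COMBINATORIAL CLAIM
  have hMAIN : ∀ x : X, (x₀, x) ∈ Dset C → (h x₀, h x) ∈ U := by
    have hUhanti : ∀ a b : ℕ, a ≤ b → Uh b ⊆ Uh a := by
      intro a b hab
      induction hab with
      | refl => exact subset_rfl
      | step _ ih => exact subset_trans (hUhQ _).2 ih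
    have hLamanti : ∀ a b : ℕ, a ≤ b → Lam b ⊆ Lam a := by
      intro a b hab
      induction hab with
      | refl => exact subset_rfl
      | step _ ih => exact subset_trans (hLamQ _).2 ih
    set GOOD : ℕ → ℕ → (ℕ → X) → (ℕ → ℕ) → (ℕ → ℕ) → Prop := fun q s₁ w₁ gr₁ kk₁ =>
      w₁ 0 = x₀ ∧ (∀ i, i ≤ s₁ → w₁ i ∈ TX.S q) ∧
      (∀ i, i < s₁ → (w₁ i, w₁ (i+1)) ∈ Ω (kk₁ i) (gr₁ i)) ∧
      (∀ i, i < s₁ → kk₁ i ≤ q) ∧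
      (∀ i, i < s₁ → w₁ i ∈ TX.S (kk₁ i) ∧ w₁ (i+1) ∈ TX.S (kk₁ i)) with hGOODdef
    set POT : ℕ → (ℕ → ℕ) → (ℕ → ℕ) → ℝ := fun s₁ gr₁ kk₁ =>
      ∑ i ∈ Finset.range s₁, (2:ℝ)^(5 * kk₁ i) * DL.wt (gr₁ i) with hPOTdef
    have hPOTnonneg : ∀ s₁ gr₁ kk₁, 0 ≤ POT s₁ gr₁ kk₁ := by
      intro s₁ gr₁ kk₁
      rw [hPOTdef]
      exact Finset.sum_nonneg fun i _ => (mul_pos (DL.pw_pos _) (DL.wt_pos _)).le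
    have hPOTsucc : ∀ s₁ gr₁ kk₁, POT (s₁+1) gr₁ kk₁ =
        POT s₁ gr₁ kk₁ + (2:ℝ)^(5 * kk₁ s₁) * DL.wt (gr₁ s₁) := by
      intro s₁ gr₁ kk₁
      rw [hPOTdef]
      exact Finset.sum_range_succ _ _
    -- appending one step to a good chain
    have happend : ∀ (q s₁ : ℕ) (w₁ : ℕ → X) (gr₁ kk₁ : ℕ → ℕ) (b : X) (k' g' : ℕ),
        GOOD q s₁ w₁ gr₁ kk₁ → b ∈ TX.S q → k' ≤ q →
        (w₁ s₁, b) ∈ Ω k' g' → w₁ s₁ ∈ TX.S k' → b ∈ TX.S k' →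
        ∃ (w₂ : ℕ → X) (gr₂ kk₂ : ℕ → ℕ), GOOD q (s₁+1) w₂ gr₂ kk₂ ∧ w₂ (s₁+1) = b ∧
          POT (s₁+1) gr₂ kk₂ = POT s₁ gr₁ kk₁ + (2:ℝ)^(5*k') * DL.wt g' := by
      intro q s₁ w₁ gr₁ kk₁ b k' g' hG hbq hk'q hstepb hwk' hbk'
      rw [hGOODdef] at hG
      obtain ⟨hG1, hG2, hG3, hG4, hG5⟩ := hG
      refine ⟨fun i => if i ≤ s₁ then w₁ i else b,
        fun i => if i < s₁ then gr₁ i else g',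
        fun i => if i < s₁ then kk₁ i else k', ?_, ?_, ?_⟩
      · rw [hGOODdef]
        refine ⟨by simp [hG1], ?_, ?_, ?_, ?_⟩
        · intro i hi
          by_cases his : i ≤ s₁
          · simpa [his] using hG2 i his
          · simpa [his] using hbq
        · intro i hi
          by_cases his : i < s₁
          · have h1 : i ≤ s₁ := by omega
            have h2 : i + 1 ≤ s₁ := by omega
            simpa [his, h1, h2] using hG3 i his
          · have hieq : i = s₁ := by omega
            subst hieq
            have h2 : ¬ (i + 1 ≤ i) := by omega
            simpa [his, h2] using hstepb
        · intro i hi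
          by_cases his : i < s₁
          · simpa [his] using hG4 i his
          · simpa [his] using hk'q
        · intro i hi
          by_cases his : i < s₁
          · have h1 : i ≤ s₁ := by omega
            have h2 : i + 1 ≤ s₁ := by omega
            simpa [his, h1, h2] using hG5 i his
          · have hieq : i = s₁ := by omega
            subst hieq
            have h2 : ¬ (i + 1 ≤ i) := by omega
            simp only [his, if_neg, le_refl, if_pos, h2, if_false]
            constructor
            · simpa using hwk'
            · simpa [h2] using hbk'
      · have h2 : ¬ (s₁ + 1 ≤ s₁) := by omega
        simp [h2]
      · simp only [hPOTdef]
        rw [Finset.sum_range_succ]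
        have e1 : ∀ i ∈ Finset.range s₁,
            (2:ℝ)^(5 * (if i < s₁ then kk₁ i else k')) * DL.wt (if i < s₁ then gr₁ i else g') =
            (2:ℝ)^(5 * kk₁ i) * DL.wt (gr₁ i) := by
          intro i hi
          have his : i < s₁ := Finset.mem_range.mp hi
          simp [his]
        rw [Finset.sum_congr rfl e1]
        have h2 : ¬ (s₁ < s₁) := by omega
        simp [h2]
    -- the ε budgets on the Y side
    set eps : ℕ → ℝ := fun j => ∑ l ∈ Finset.range j, DL.wt (5*(n₀+l+1) + 5*n₀ + 10)
      with hepsdef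
    have hepsnonneg : ∀ j, 0 ≤ eps j := by
      intro j; rw [hepsdef]
      exact Finset.sum_nonneg fun l _ => (DL.wt_pos _).le
    have hepssucc : ∀ j, eps (j+1) = eps j + DL.wt (5*(n₀+j+1) + 5*n₀ + 10) := by
      intro j; simp only [hepsdef]
      exact Finset.sum_range_succ _ _
    have hepsmono : ∀ j, eps j ≤ eps (j+1) := fun j => by
      rw [hepssucc]; linarith [DL.wt_pos (5*(n₀+j+1) + 5*n₀ + 10)]
    have hepsbound : ∀ j, eps j ≤ DL.wt 14 := by
      intro j
      rw [hepsdef]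
      calc (∑ l ∈ Finset.range j, DL.wt (5*(n₀+l+1) + 5*n₀ + 10))
          ≤ ∑ l ∈ Finset.range j, DL.wt 15 * DL.wt l := by
            refine Finset.sum_le_sum fun l _ => ?_
            rw [← DL.wt_mul]
            exact DL.wt_anti (by omega)
        _ = DL.wt 15 * ∑ l ∈ Finset.range j, DL.wt l := by rw [Finset.mul_sum]
        _ ≤ DL.wt 15 * 2 := by
            refine mul_le_mul_of_nonneg_left ?_ (DL.wt_pos 15).le
            simpa [DL.wt] using sum_geometric_two_le j
        _ = DL.wt 14 := by
            have := DL.wt_succ 14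
            linarith
    set UC : ℕ → Y → Y → Prop := fun j y y' =>
      DL.chainP (fun a b g => (a,b) ∈ Uh g) (fun _ _ g => DL.wt g) (eps j) y y' with hUCdef
    -- the descent induction
    have hIND : ∀ j (s : ℕ) (w : ℕ → X) (gr kk : ℕ → ℕ),
        GOOD (n₀+j) s w gr kk → POT s gr kk ≤ DL.wt C →
        ∃ u', u' ∈ TX.S n₀ ∧ (x₀, u') ∈ Lam 0 ∧ UC j (h (w s)) (h u') := by
      intro j
      induction j with
      | zero =>
        intro s w gr kk hG hsum
        rw [hGOODdef] at hG
        obtain ⟨hG1, hG2, hG3, hG4, hG5⟩ := hG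
        refine ⟨w s, by simpa using hG2 s le_rfl, ?_, ?_⟩
        · rcases Nat.eq_zero_or_pos s with hs | hs
          · rw [hs, hG1]
            exact UniformTower.IsEnt.refl TX (hLament 0) hx₀
          · have hsum2 : (∑ i ∈ Finset.range s, DL.wt (gr i)) ≤ DL.wt ((5*n₀ + 11) + 1) := by
              have hCe : DL.wt C = DL.wt ((5*n₀+11)+1) := by rw [hCdef]
              rw [← hCe]
              refine le_trans ?_ hsum
              rw [hPOTdef]
              refine Finset.sum_le_sum fun i _ => ?_
              have h1 : (1:ℝ) ≤ 2^(5 * kk i) := DL.pw_ge_one _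
              nlinarith [DL.wt_pos (gr i)]
            have hcc := DL.chain_comp Lam (TX.S n₀) (fun g => hLamsub g)
              (fun g z hz => UniformTower.IsEnt.refl TX (hLament g) hz) hLamcube
              s w gr (5*n₀ + 11) (by rw [hG1]; simpa using hx₀)
              (fun i hi => hΩlow (kk i) (gr i) (by simpa using hG4 i hi) (hG3 i hi))
              hsum2
            rw [hG1] at hcc
            exact hLamanti 0 (5*n₀+11) (by omega) hcc
        · rw [hUCdef]
          exact DL.chainP_refl _ _ (hepsnonneg 0) _
      | succ j IH =>
        intro s w gr kk hG hsum
        rw [hGOODdef] at hG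
        obtain ⟨hG1, hG2, hG3, hG4, hG5⟩ := hG
        have hPOTle : ∀ r, r ≤ s → POT r gr kk ≤ DL.wt C := by
          intro r hr
          refine le_trans ?_ hsum
          simp only [hPOTdef]
          exact Finset.sum_le_sum_of_subset_of_nonneg
            (Finset.range_subset_range.mpr hr)
            (fun i _ _ => (mul_pos (DL.pw_pos _) (DL.wt_pos _)).le)
        -- composing a tail chain at stage n₀+j+1
        have hcompose : ∀ (σ' : ℝ) (uu zz : X), 0 < σ' →
            (2:ℝ)^(5*(n₀+j+1)) * σ' ≤ DL.wt C → uu ∈ TX.S (n₀+j) →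
            DL.chainP (fun a b g => (a,b) ∈ Ω (n₀+j+1) g) (fun _ _ g => DL.wt g) σ' uu zz →
            ∃ γ' : ℕ, 5*(n₀+j+1) + C ≤ γ' + 2 ∧ DL.wt (γ'+3) < σ' ∧
              (uu, zz) ∈ Ω (n₀+j+1) (γ'+1) := by
          intro σ' uu zz hσpos hσbound huu htail
          have hK1 : (1:ℝ) ≤ 2^(5*(n₀+j+1)) := DL.pw_ge_one _
          have hσ1 : σ' ≤ 1 := by nlinarith [DL.wt_le_one C]
          obtain ⟨γ, hγ1, hγ2⟩ := DL.exists_best hσpos hσ1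
          have hγge : 5*(n₀+j+1) + C ≤ γ := by
            have h2 : σ' ≤ DL.wt (C + 5*(n₀+j+1)) := by
              rw [DL.wt_mul]
              have h3 := DL.pw_wt (5*(n₀+j+1))
              nlinarith [DL.pw_pos (5*(n₀+j+1)), DL.wt_pos C, DL.wt_pos (5*(n₀+j+1))]
            have h4 : DL.wt (γ+1) < DL.wt (C + 5*(n₀+j+1)) := lt_of_lt_of_le hγ2 h2
            have h5 := DL.wt_lt_iff.mp h4
            omega
          obtain ⟨γ', hγ'⟩ : ∃ γ', γ = γ' + 2 := ⟨γ - 2, by omega⟩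
          subst hγ'
          refine ⟨γ', by omega, by exact hγ2, ?_⟩
          obtain ⟨ts, tw, tgr, htw0, htws, htsteps, htsum⟩ := htail
          have hcc := DL.chain_comp (fun g => Ω (n₀+j+1) g) (TX.S (n₀+j+1))
            (fun g => hΩsub _ g) (fun g z hz => hΩrefl _ g z hz) (fun g => hΩcube _ g)
            ts tw tgr (γ'+1)
            (by rw [htw0]; exact TX.mono (by omega) huu)
            htsteps (le_trans htsum hγ1)
          rw [htw0, htws] at hcc
          exact hcc
        -- processing the chain, dropping to stage n₀+j
        have hAUX : ∀ r, r ≤ s →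
            ∃ (s₁ : ℕ) (w₁ : ℕ → X) (gr₁ kk₁ : ℕ → ℕ), GOOD (n₀+j) s₁ w₁ gr₁ kk₁ ∧
              ((w r ∈ TX.S (n₀+j) ∧ w₁ s₁ = w r ∧ POT s₁ gr₁ kk₁ ≤ POT r gr kk) ∨
               (w r ∉ TX.S (n₀+j) ∧ ∃ σ : ℝ, 0 < σ ∧
                 DL.chainP (fun a b g => (a,b) ∈ Ω (n₀+j+1) g) (fun _ _ g => DL.wt g)
                   σ (w₁ s₁) (w r) ∧
                 POT s₁ gr₁ kk₁ + (2:ℝ)^(5*(n₀+j+1)) * σ ≤ POT r gr kk)) := by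
          intro r
          induction r with
          | zero =>
            intro _
            refine ⟨0, fun _ => x₀, fun _ => 0, fun _ => 0, ?_, Or.inl ⟨?_, ?_, ?_⟩⟩
            · rw [hGOODdef]
              refine ⟨rfl, fun i hi => TX.mono (by omega : n₀ ≤ n₀+j) hx₀,
                fun i hi => by omega, fun i hi => by omega, fun i hi => by omega⟩
            · rw [hG1]; exact TX.mono (by omega) hx₀
            · simp [hG1]
            · simp only [hPOTdef]
              simp
          | succ r IHr =>
            intro hr1
            obtain ⟨s₁, w₁, gr₁, kk₁, hGd, hdisj⟩ := IHr (by omega)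
            have hGd2 := hGd
            rw [hGOODdef] at hGd2
            have hstepr := hG3 r (by omega)
            have hkkr := hG4 r (by omega)
            have hkmemr := hG5 r (by omega)
            have hw1S : w₁ s₁ ∈ TX.S (n₀+j) := hGd2.2.1 s₁ le_rfl
            by_cases hb : w (r+1) ∈ TX.S (n₀+j)
            · rcases hdisj with ⟨hwr, hws, hpot⟩ | ⟨hwr, σ, hσpos, htail, hpot⟩
              · -- state (a), keep the point
                by_cases hkr : kk r ≤ n₀ + j
                · obtain ⟨w₂, gr₂, kk₂, hG₂, hend, hPOT₂⟩ := happend (n₀+j) s₁ w₁ gr₁ kk₁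
                    (w (r+1)) (kk r) (gr r) hGd hb hkr (by rw [hws]; exact hstepr)
                    (by rw [hws]; exact hkmemr.1) hkmemr.2
                  refine ⟨s₁+1, w₂, gr₂, kk₂, hG₂, Or.inl ⟨hb, hend, ?_⟩⟩
                  rw [hPOT₂, hPOTsucc]
                  linarith [hpot]
                · have hkreq : kk r = n₀+j+1 := by
                    have := hkkr
                    omega
                  have hdown : (w r, w (r+1)) ∈ Ω (n₀+j) (gr r) := by
                    apply hΩdown (n₀+j) (gr r)
                    refine ⟨?_, hwr, hb⟩
                    rw [← hkreq]
                    exact hstepr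
                  obtain ⟨w₂, gr₂, kk₂, hG₂, hend, hPOT₂⟩ := happend (n₀+j) s₁ w₁ gr₁ kk₁
                    (w (r+1)) (n₀+j) (gr r) hGd hb le_rfl (by rw [hws]; exact hdown)
                    (by rw [hws]; exact hwr) hb
                  refine ⟨s₁+1, w₂, gr₂, kk₂, hG₂, Or.inl ⟨hb, hend, ?_⟩⟩
                  rw [hPOT₂, hPOTsucc]
                  have hle2 : (2:ℝ)^(5*(n₀+j)) ≤ 2^(5*kk r) := DL.pw_le (by omega)
                  nlinarith [DL.wt_pos (gr r)]
              · -- state (b), next point returns to S (n₀+j): contract the block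
                have hkreq : kk r = n₀+j+1 := by
                  by_contra hc
                  have hcle : kk r ≤ n₀ + j := by omega
                  exact hwr (TX.mono hcle hkmemr.1)
                have hstepK : (w r, w (r+1)) ∈ Ω (n₀+j+1) (gr r) := by
                  rw [← hkreq]; exact hstepr
                have htail2 := DL.chainP_trans _ _ htail (DL.chainP_single
                  (fun a b g => (a,b) ∈ Ω (n₀+j+1) g) (fun _ _ g => DL.wt g)
                  (g := gr r) hstepK (le_refl _))
                have hterm : (2:ℝ)^(5*kk r) * DL.wt (gr r) =
                    (2:ℝ)^(5*(n₀+j+1)) * DL.wt (gr r) := by rw [hkreq]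
                have hσ'pos : 0 < σ + DL.wt (gr r) := by
                  have := DL.wt_pos (gr r); linarith
                have hσ'bound : (2:ℝ)^(5*(n₀+j+1)) * (σ + DL.wt (gr r)) ≤ DL.wt C := by
                  have h1 := hPOTle (r+1) (by omega)
                  rw [hPOTsucc, hkreq] at h1
                  have h2 := hPOTnonneg s₁ gr₁ kk₁
                  have h3 : (2:ℝ)^(5*(n₀+j+1)) * (σ + DL.wt (gr r)) =
                      (2:ℝ)^(5*(n₀+j+1)) * σ + (2:ℝ)^(5*(n₀+j+1)) * DL.wt (gr r) := by
                    ring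
                  linarith [hpot]
                obtain ⟨γ', hγ'ge, hγ'lt, hγ'mem⟩ := hcompose (σ + DL.wt (gr r))
                  (w₁ s₁) (w (r+1)) hσ'pos hσ'bound hw1S htail2
                have hdown : (w₁ s₁, w (r+1)) ∈ Ω (n₀+j) (γ'+1) :=
                  hΩdown (n₀+j) (γ'+1) ⟨hγ'mem, hw1S, hb⟩
                obtain ⟨w₂, gr₂, kk₂, hG₂, hend, hPOT₂⟩ := happend (n₀+j) s₁ w₁ gr₁ kk₁
                  (w (r+1)) (n₀+j) (γ'+1) hGd hb le_rfl hdown hw1S hb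
                refine ⟨s₁+1, w₂, gr₂, kk₂, hG₂, Or.inl ⟨hb, hend, ?_⟩⟩
                rw [hPOT₂, hPOTsucc, hkreq]
                -- arithmetic: small new weight
                have hp1 := DL.pw_pos (5*(n₀+j))
                have hA : (2:ℝ)^(5*(n₀+j+1)) = 32 * (2:ℝ)^(5*(n₀+j)) := by
                  rw [show 5*(n₀+j+1) = 5*(n₀+j)+5 by ring, pow_add]
                  norm_num
                  ring
                have hwt : DL.wt (γ'+1) = 4 * DL.wt (γ'+3) := by
                  have e1 := DL.wt_succ (γ'+1)
                  have e2 := DL.wt_succ (γ'+2)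
                  linarith
                have k2 : (2:ℝ)^(5*(n₀+j)) * DL.wt (γ'+1) =
                    4*((2:ℝ)^(5*(n₀+j)) * DL.wt (γ'+3)) := by rw [hwt]; ring
                have k1 : (2:ℝ)^(5*(n₀+j)) * DL.wt (γ'+3) <
                    (2:ℝ)^(5*(n₀+j)) * σ + (2:ℝ)^(5*(n₀+j)) * DL.wt (gr r) := by
                  have hk := mul_lt_mul_of_pos_left hγ'lt hp1
                  nlinarith [hk]
                have hpot' : POT s₁ gr₁ kk₁ +
                    32*((2:ℝ)^(5*(n₀+j)) * σ) ≤ POT r gr kk := by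
                  rw [hA] at hpot
                  linarith [hpot]
                have hA2 : (2:ℝ)^(5*(n₀+j+1)) * DL.wt (gr r) =
                    32*((2:ℝ)^(5*(n₀+j)) * DL.wt (gr r)) := by rw [hA]; ring
                rw [hA2]
                have hq1 : 0 ≤ (2:ℝ)^(5*(n₀+j)) * σ :=
                  (mul_pos hp1 hσpos).le
                have hq2 : 0 ≤ (2:ℝ)^(5*(n₀+j)) * DL.wt (gr r) :=
                  (mul_pos hp1 (DL.wt_pos _)).le
                linarith [k1, k2, hpot']
            · -- next point stays above S (n₀+j)
              have hkreq : kk r = n₀+j+1 := by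
                have h2 := hkmemr.2
                by_contra hc
                have hcle : kk r ≤ n₀ + j := by omega
                exact hb (TX.mono hcle h2)
              have hstepK : (w r, w (r+1)) ∈ Ω (n₀+j+1) (gr r) := by
                rw [← hkreq]; exact hstepr
              have hterm : (2:ℝ)^(5*kk r) * DL.wt (gr r) =
                  (2:ℝ)^(5*(n₀+j+1)) * DL.wt (gr r) := by rw [hkreq]
              rcases hdisj with ⟨hwr, hws, hpot⟩ | ⟨hwr, σ, hσpos, htail, hpot⟩
              · -- start a new block
                refine ⟨s₁, w₁, gr₁, kk₁, hGd, Or.inr ⟨hb, DL.wt (gr r), DL.wt_pos _, ?_, ?_⟩⟩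
                · refine DL.chainP_single _ _ (g := gr r) ?_ (le_refl _)
                  rw [hws]
                  exact hstepK
                · rw [hPOTsucc, hkreq]
                  linarith [hpot]
              · -- extend the block
                refine ⟨s₁, w₁, gr₁, kk₁, hGd, Or.inr ⟨hb, σ + DL.wt (gr r),
                  by have := DL.wt_pos (gr r); linarith, ?_, ?_⟩⟩
                · exact DL.chainP_trans _ _ htail (DL.chainP_single _ _ (g := gr r)
                    hstepK (le_refl _))
                · rw [hPOTsucc, hkreq]
                  have hexp : (2:ℝ)^(5*(n₀+j+1)) * (σ + DL.wt (gr r)) =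
                      (2:ℝ)^(5*(n₀+j+1)) * σ + (2:ℝ)^(5*(n₀+j+1)) * DL.wt (gr r) := by ring
                  rw [hexp]
                  linarith [hpot]
        -- finish the descent step
        obtain ⟨s₁, w₁, gr₁, kk₁, hGd, hdisj⟩ := hAUX s le_rfl
        have hGd2 := hGd
        rw [hGOODdef] at hGd2
        have hw1S : w₁ s₁ ∈ TX.S (n₀+j) := hGd2.2.1 s₁ le_rfl
        rcases hdisj with ⟨hwr, hws, hpot⟩ | ⟨hwr, σ, hσpos, htail, hpot⟩
        · obtain ⟨u', hu'1, hu'2, hu'3⟩ := IH s₁ w₁ gr₁ kk₁ hGd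
            (le_trans hpot (hPOTle s le_rfl))
          refine ⟨u', hu'1, hu'2, ?_⟩
          rw [hUCdef]
          rw [hUCdef] at hu'3
          rw [hws] at hu'3
          exact DL.chainP_mono _ _ (hepsmono j) hu'3
        · -- final replacement via regularity
          have hσbound : (2:ℝ)^(5*(n₀+j+1)) * σ ≤ DL.wt C := by
            have h1 := hPOTle s le_rfl
            have h2 := hPOTnonneg s₁ gr₁ kk₁
            linarith [hpot]
          obtain ⟨γ', hγ'ge, hγ'lt, hγ'mem⟩ := hcompose σ (w₁ s₁) (w s)
            hσpos hσbound hw1S htail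
          have hwsS : w s ∈ TX.S (n₀+j+1) := hG2 s le_rfl
          obtain ⟨a, haS, haΩ, haU⟩ := hΩF4 (n₀+j) γ' (w s) (w₁ s₁) (by omega)
            hwsS hw1S hγ'mem
          obtain ⟨w₂, gr₂, kk₂, hG₂, hend, hPOT₂⟩ := happend (n₀+j) s₁ w₁ gr₁ kk₁
            a (n₀+j) γ' hGd haS le_rfl haΩ hw1S haS
          have hPOT₂le : POT (s₁+1) gr₂ kk₂ ≤ DL.wt C := by
            rw [hPOT₂]
            have hp1 := DL.pw_pos (5*(n₀+j))
            have hA : (2:ℝ)^(5*(n₀+j+1)) = 32 * (2:ℝ)^(5*(n₀+j)) := by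
              rw [show 5*(n₀+j+1) = 5*(n₀+j)+5 by ring, pow_add]
              norm_num
              ring
            have hwt : DL.wt γ' = 8 * DL.wt (γ'+3) := by
              have e1 := DL.wt_succ γ'
              have e2 := DL.wt_succ (γ'+1)
              have e3 := DL.wt_succ (γ'+2)
              linarith
            have k2 : (2:ℝ)^(5*(n₀+j)) * DL.wt γ' =
                8*((2:ℝ)^(5*(n₀+j)) * DL.wt (γ'+3)) := by rw [hwt]; ring
            have k1 : (2:ℝ)^(5*(n₀+j)) * DL.wt (γ'+3) < (2:ℝ)^(5*(n₀+j)) * σ :=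
              mul_lt_mul_of_pos_left hγ'lt hp1
            have hpot' : POT s₁ gr₁ kk₁ + 32*((2:ℝ)^(5*(n₀+j)) * σ) ≤ POT s gr kk := by
              rw [hA] at hpot
              linarith [hpot]
            have h1 := hPOTle s le_rfl
            have hq1 : 0 ≤ (2:ℝ)^(5*(n₀+j)) * σ := (mul_pos hp1 hσpos).le
            linarith [k1, k2, hpot']
          obtain ⟨u', hu'1, hu'2, hu'3⟩ := IH (s₁+1) w₂ gr₂ kk₂ hG₂ hPOT₂le
          refine ⟨u', hu'1, hu'2, ?_⟩
          rw [hUCdef]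
          rw [hUCdef] at hu'3
          rw [hend] at hu'3
          have hsingle := DL.chainP_single (fun a b g => (a,b) ∈ Uh g)
            (fun _ _ g => DL.wt g) (g := γ'+1) haU (le_refl _)
          have hcomb := DL.chainP_trans _ _ hsingle hu'3
          refine DL.chainP_mono _ _ ?_ hcomb
          rw [hepssucc]
          have : DL.wt (γ'+1) ≤ DL.wt (5*(n₀+j+1) + 5*n₀ + 10) := by
            refine DL.wt_anti ?_
            rw [hCdef] at hγ'ge
            omega
          linarith
    -- apply the induction to the given chain
    intro x hx
    rw [hDmem] at hx
    obtain ⟨s, w, gr, hw0, hws, hsteps, hsum⟩ := hx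
    have hq0 : x₀ ∈ TX.S n₀ := hx₀
    set Nst := max (Finset.sup (Finset.range (s+1)) (fun i => TX.height (w i))) n₀ with hNst
    have hNlow : n₀ ≤ Nst := le_max_right _ _
    obtain ⟨j, hNj⟩ : ∃ j, n₀ + j = Nst := ⟨Nst - n₀, by omega⟩
    have hheights : ∀ i, i ≤ s → TX.height (w i) ≤ Nst := by
      intro i hi
      exact le_trans (Finset.le_sup (f := fun i => TX.height (w i))
        (Finset.mem_range.mpr (by omega))) (le_max_left _ _)
    have hG : GOOD (n₀+j) s w gr
        (fun i => max (TX.height (w i)) (TX.height (w (i+1)))) := by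
      rw [hGOODdef]
      refine ⟨hw0, ?_, ?_, ?_, ?_⟩
      · intro i hi
        rw [hNj]
        exact TX.mono (hheights i hi) (TX.mem_S_height _)
      · intro i hi
        have := hsteps i hi
        rw [hstepXdef] at this
        exact this
      · intro i hi
        rw [hNj]
        exact max_le (hheights i (by omega)) (hheights (i+1) (by omega))
      · intro i hi
        exact ⟨TX.mono (le_max_left _ _) (TX.mem_S_height _),
          TX.mono (le_max_right _ _) (TX.mem_S_height _)⟩
    have hPOTx : POT s gr (fun i => max (TX.height (w i)) (TX.height (w (i+1)))) ≤ DL.wt C := by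
      simp only [hPOTdef]
      have := hsum
      simp only [hwtfXdef] at this
      exact this
    obtain ⟨u', hu'S, hu'Λ, hu'UC⟩ := hIND j s w gr _ hG hPOTx
    have h1 : (h x₀, h u') ∈ Uh 1 := hΘkey u' (hLamΘ 0 hu'Λ)
    have h2 : (h (w s), h u') ∈ Uh 1 := by
      rw [hUCdef] at hu'UC
      obtain ⟨ys, yv, ygr, hy0, hyE, hyS, hySum⟩ := hu'UC
      have hcc := DL.chain_comp Uh Set.univ (fun g p _ => ⟨trivial, trivial⟩)
        (fun g z _ => refl_mem_uniformity (hUhent g)) hUhcube ys yv ygr 13 trivial hyS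
        (le_trans hySum (by
          have h14 : DL.wt 14 = DL.wt (13+1) := rfl
          rw [← h14]
          exact hepsbound j))
      rw [hy0, hyE] at hcc
      exact hUhanti 1 13 (by omega) hcc
    have h3 : (h u', h (w s)) ∈ Uh 1 := (hUhsymm 1).mk_mem_comm.mp h2
    have h4 : (h x₀, h (w s)) ∈ U :=
      hUhU 0 (hUhcube 0 ⟨h (w s), ⟨h u', h1, h3⟩, refl_mem_uniformity (hUhent 1)⟩)
    rw [hws] at h4
    exact h4
  -- conclusion
  have hballnhds : UniformSpace.ball x₀ (Dset C) ∈ @nhds X u'.toTopologicalSpace x₀ :=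
    @UniformSpace.ball_mem_nhds X u' x₀ _ (by rw [hu'uni]; exact hDmemiInf C)
  have hmono : TX.dirLim.toTopologicalSpace ≤ u'.toTopologicalSpace :=
    UniformSpace.toTopologicalSpace_mono hle
  have hball' : UniformSpace.ball x₀ (Dset C) ∈ @nhds X tX x₀ :=
    nhds_mono hmono hballnhds
  refine Filter.mem_of_superset hball' ?_
  intro x hx
  exact hUN (hMAIN x hx)


end Aux

/-- A bijective function `h : u-lim X_n → u-lim Y_n` between the uniform direct limits of two
towers of uniform spaces, with inverse `g`, is a homeomorphism provided that for every `n ≥ 1`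
the restriction `h|X_n : X_n → u-lim Y_n` is continuous and regular at `X_{n-1} ⊆ X_n` and the
restriction `g|Y_n = h⁻¹|Y_n : Y_n → u-lim X_n` is continuous and regular at `Y_{n-1} ⊆ Y_n`
(here stated with `n = m + 1`). -/
theorem statement5 {X Y : Type u} (TX : UniformTower X) (TY : UniformTower Y)
    (h : X → Y) (g : Y → X)
    (hbij : Function.Bijective h)
    (hgh : Function.LeftInverse g h) (hhg : Function.RightInverse g h)
    (hcont : ∀ m : ℕ, @Continuous _ _ (TX.u (m + 1)).toTopologicalSpace
      TY.dirLim.toTopologicalSpace (fun z : TX.S (m + 1) => h z.val))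
    (hreg : ∀ m : ℕ, RegularAt (TX.u (m + 1)) TY.dirLim (fun z : TX.S (m + 1) => h z.val)
      {z : TX.S (m + 1) | z.val ∈ TX.S m})
    (hcont' : ∀ m : ℕ, @Continuous _ _ (TY.u (m + 1)).toTopologicalSpace
      TX.dirLim.toTopologicalSpace (fun z : TY.S (m + 1) => g z.val))
    (hreg' : ∀ m : ℕ, RegularAt (TY.u (m + 1)) TX.dirLim (fun z : TY.S (m + 1) => g z.val)
      {z : TY.S (m + 1) | z.val ∈ TY.S m}) :
    @IsHomeomorph X Y TX.dirLim.toTopologicalSpace TY.dirLim.toTopologicalSpace h := by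
  letI tX : TopologicalSpace X := TX.dirLim.toTopologicalSpace
  letI tY : TopologicalSpace Y := TY.dirLim.toTopologicalSpace
  have hc : @Continuous X Y TX.dirLim.toTopologicalSpace TY.dirLim.toTopologicalSpace h :=
    cont_key TX TY h hcont hreg
  have hg : @Continuous Y X TY.dirLim.toTopologicalSpace TX.dirLim.toTopologicalSpace g :=
    cont_key TY TX g hcont' hreg'
  exact isHomeomorph_iff_exists_inverse.mpr ⟨hc, g, hgh, hhg, hg⟩
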